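/- Let M be a square joint probability matrix on a finite type α and let M̄ = (M + Mᵀ)/2 be its symmetrized matrix. Then the conditional entropy of M̄ is bounded by the average of the two conditional entropies of M plus one bit: H_{M̄}(Y|X) ≤ (1/2)·(H_M(Y|X) + H_M(X|Y)) + 1. (A sharpened form of the symmetrization theorem, obtained by combining the joint-entropy and marginal-entropy estimates for M̄.) -/

import Mathlib

/-- A probability vector on a finite type: nonnegative entries summing to 1. -/
def IsProbVec {α : Type*} [Fintype α] (p : α → ℝ) : Prop :=
  (∀ a, 0 ≤ p a) ∧ ∑ a, p a = 1

/-- Binary Shannon entropy of a (probability) vector. -/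
noncomputable def binH {α : Type*} [Fintype α] (p : α → ℝ) : ℝ :=
  (∑ a, Real.negMulLog (p a)) / Real.log 2
/-- A joint probability matrix on finite types α and β. -/
def IsJointProbMat {α β : Type*} [Fintype α] [Fintype β] (M : α → β → ℝ) : Prop :=
  (∀ a b, 0 ≤ M a b) ∧ ∑ a, ∑ b, M a b = 1

/-- Binary joint entropy of a joint probability matrix, viewed as a vector on α × β. -/
noncomputable def jointH {α β : Type*} [Fintype α] [Fintype β] (M : α → β → ℝ) : ℝ :=
  binH (fun ab : α × β => M ab.1 ab.2)

/-- Row marginal of a joint probability matrix. -/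
noncomputable def rowMarg {α β : Type*} [Fintype α] [Fintype β] (M : α → β → ℝ) : α → ℝ :=
  fun a => ∑ b, M a b

/-- Column marginal of a joint probability matrix. -/
noncomputable def colMarg {α β : Type*} [Fintype α] [Fintype β] (M : α → β → ℝ) : β → ℝ :=
  fun b => ∑ a, M a b

/-- Binary conditional entropy H_M(Y|X) = H(M) - H(rowMarg M). -/
noncomputable def condHYX {α β : Type*} [Fintype α] [Fintype β] (M : α → β → ℝ) : ℝ :=
  jointH M - binH (rowMarg M)

/-- Binary conditional entropy H_M(X|Y) = H(M) - H(colMarg M). -/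
noncomputable def condHXY {α β : Type*} [Fintype α] [Fintype β] (M : α → β → ℝ) : ℝ :=
  jointH M - binH (colMarg M)

/-- Symmetrized matrix (M + Mᵀ)/2 of a square joint probability matrix. -/
noncomputable def symmetrize {α : Type*} [Fintype α] (M : α → α → ℝ) : α → α → ℝ :=
  fun a b => (M a b + M b a) / 2


lemma negMulLog_add_le' {x y : ℝ} (hx : 0 ≤ x) (hy : 0 ≤ y) :
    Real.negMulLog (x + y) ≤ Real.negMulLog x + Real.negMulLog y := by
  have h1 : -x * Real.log (x + y) ≤ Real.negMulLog x := by
    rcases eq_or_lt_of_le hx with h | h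
    · simp [← h]
    · have hlog : Real.log x ≤ Real.log (x + y) := Real.log_le_log h (by linarith)
      unfold Real.negMulLog; nlinarith
  have h2 : -y * Real.log (x + y) ≤ Real.negMulLog y := by
    rcases eq_or_lt_of_le hy with h | h
    · simp [← h]
    · have hlog : Real.log y ≤ Real.log (x + y) := Real.log_le_log h (by linarith)
      unfold Real.negMulLog; nlinarith
  have h3 : Real.negMulLog (x + y) = -x * Real.log (x + y) + -y * Real.log (x + y) := by
    unfold Real.negMulLog; ring
  linarith

lemma negMulLog_half (z : ℝ) :
    Real.negMulLog (z / 2) = Real.negMulLog z / 2 + (z / 2) * Real.log 2 := by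
  have h : z / 2 = z * (1 / 2) := by ring
  rw [h, Real.negMulLog_mul]
  have h2 : Real.negMulLog (1 / 2 : ℝ) = Real.log 2 / 2 := by
    unfold Real.negMulLog
    rw [show (1 : ℝ) / 2 = 2⁻¹ by norm_num, Real.log_inv]
    ring
  rw [h2]; ring

lemma avg_negMulLog_le {x y : ℝ} (hx : 0 ≤ x) (hy : 0 ≤ y) :
    (Real.negMulLog x + Real.negMulLog y) / 2 ≤ Real.negMulLog ((x + y) / 2) := by
  have h := Real.concaveOn_negMulLog.2 (Set.mem_Ici.2 hx) (Set.mem_Ici.2 hy)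
    (by norm_num : (0 : ℝ) ≤ 1 / 2) (by norm_num : (0 : ℝ) ≤ 1 / 2) (by norm_num)
  simp only [smul_eq_mul] at h
  have hxy : (x + y) / 2 = (1 / 2 : ℝ) * x + (1 / 2 : ℝ) * y := by ring
  rw [hxy]
  linarith

/-- Sharpened symmetrization theorem: the conditional entropy of the symmetrized matrix
is at most the average of the two conditional entropies of `M`, plus one bit. -/
theorem symmetrize_condEntropy_le_average {α : Type*} [Fintype α] (M : α → α → ℝ)
    (hM : IsJointProbMat M) :
    condHYX (symmetrize M) ≤ (1/2) * (condHYX M + condHXY M) + 1 := by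
  obtain ⟨hnn, hsum1⟩ := hM
  have hL : (0 : ℝ) < Real.log 2 := Real.log_pos one_lt_two
  set L := Real.log 2 with hLdef
  set S := ∑ ab : α × α, Real.negMulLog (M ab.1 ab.2) with hS
  set R := ∑ a, Real.negMulLog (rowMarg M a) with hR
  set C := ∑ a, Real.negMulLog (colMarg M a) with hC
  have hswap : ∑ ab : α × α, Real.negMulLog (M ab.2 ab.1) = S := by
    rw [hS, Fintype.sum_prod_type, Fintype.sum_prod_type]
    exact Finset.sum_comm
  have hsumP : ∑ ab : α × α, M ab.1 ab.2 = 1 := by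
    rw [Fintype.sum_prod_type]; exact hsum1
  have hsumP' : ∑ ab : α × α, M ab.2 ab.1 = 1 := by
    rw [Fintype.sum_prod_type]
    rw [Finset.sum_comm]; exact hsum1
  -- Step 1 : joint entropy numerator bound
  have step1 : ∑ ab : α × α, Real.negMulLog (symmetrize M ab.1 ab.2) ≤ S + L := by
    have hle : ∀ ab : α × α, Real.negMulLog (symmetrize M ab.1 ab.2)
        ≤ (Real.negMulLog (M ab.1 ab.2) + Real.negMulLog (M ab.2 ab.1)) / 2
          + ((M ab.1 ab.2 + M ab.2 ab.1) / 2) * L := by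
      intro ab
      have h1 := negMulLog_add_le' (hnn ab.1 ab.2) (hnn ab.2 ab.1)
      have h2 := negMulLog_half (M ab.1 ab.2 + M ab.2 ab.1)
      unfold symmetrize
      rw [h2]
      have : (0:ℝ) ≤ ((M ab.1 ab.2 + M ab.2 ab.1) / 2) * L := by
        apply mul_nonneg _ hL.le
        have := hnn ab.1 ab.2; have := hnn ab.2 ab.1; linarith
      linarith
    calc ∑ ab : α × α, Real.negMulLog (symmetrize M ab.1 ab.2)
        ≤ ∑ ab : α × α, ((Real.negMulLog (M ab.1 ab.2) + Real.negMulLog (M ab.2 ab.1)) / 2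
            + ((M ab.1 ab.2 + M ab.2 ab.1) / 2) * L) :=
          Finset.sum_le_sum (fun ab _ => hle ab)
      _ = (S + S) / 2 + ((1 + 1) / 2) * L := by
          rw [Finset.sum_add_distrib, ← Finset.sum_div, Finset.sum_add_distrib, hswap, ← hS,
            ← Finset.sum_mul, ← Finset.sum_div, Finset.sum_add_distrib, hsumP, hsumP']
      _ = S + L := by ring
  -- Step 2 : marginal entropy numerator bound
  have hmarg : ∀ a, rowMarg (symmetrize M) a = (rowMarg M a + colMarg M a) / 2 := by
    intro a
    unfold rowMarg colMarg symmetrize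
    rw [← Finset.sum_div, Finset.sum_add_distrib]
  have step2 : (R + C) / 2 ≤ ∑ a, Real.negMulLog (rowMarg (symmetrize M) a) := by
    have hle : ∀ a, (Real.negMulLog (rowMarg M a) + Real.negMulLog (colMarg M a)) / 2
        ≤ Real.negMulLog (rowMarg (symmetrize M) a) := by
      intro a
      rw [hmarg a]
      exact avg_negMulLog_le (Finset.sum_nonneg fun b _ => hnn a b)
        (Finset.sum_nonneg fun b _ => hnn b a)
    calc (R + C) / 2
        = ∑ a, ((Real.negMulLog (rowMarg M a) + Real.negMulLog (colMarg M a)) / 2) := by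
          rw [← Finset.sum_div, Finset.sum_add_distrib, ← hR, ← hC]
      _ ≤ _ := Finset.sum_le_sum (fun a _ => hle a)
  -- Combine
  unfold condHYX condHXY jointH binH
  set Ssym := ∑ ab : α × α, Real.negMulLog (symmetrize M ab.1 ab.2) with hSsym
  set Rsym := ∑ a, Real.negMulLog (rowMarg (symmetrize M) a) with hRsym
  have key : Ssym - Rsym ≤ 1 / 2 * ((S - R) + (S - C)) + L := by linarith
  calc Ssym / L - Rsym / L = (Ssym - Rsym) / L := by ring
    _ ≤ (1 / 2 * ((S - R) + (S - C)) + L) / L := by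
        gcongr
    _ = 1 / 2 * (S / L - R / L + (S / L - C / L)) + 1 := by
        field_simp
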